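/- Let H ≥ 1 and define α_t = (H+1)/(H+t) and α_t^j = α_j ∏_{k=j+1}^{t}(1-α_k) for 1 ≤ j ≤ t (empty product equals 1). Then for every fixed j ≥ 1, the infinite series ∑_{t=j}^{∞} α_t^j converges and equals 1 + 1/H. -/

import Mathlib

theorem weights_series_sum
    (H : ℝ) (hH : 1 ≤ H)
    (α : ℕ → ℝ) (hα : ∀ t, α t = (H + 1) / (H + t))
    (αj : ℕ → ℕ → ℝ)
    (hαj : ∀ j t, αj j t = α j * ∏ k ∈ Finset.Icc (j + 1) t, (1 - α k))
    (j : ℕ) (hj : 1 ≤ j) :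
    HasSum (fun t : ℕ => if j ≤ t then αj j t else 0) (1 + 1 / H) := by
  have hH0 : (0:ℝ) < H := lt_of_lt_of_le one_pos hH
  set P : ℕ → ℝ := fun n => ∏ k ∈ Finset.Icc (j+1) n, (1 - α k) with hPdef
  have hden : ∀ n : ℕ, (0:ℝ) < H + n := fun n => by positivity
  have hfac : ∀ k : ℕ, 1 ≤ k → 1 - α k = ((k:ℝ) - 1) / (H + k) := by
    intro k hk
    rw [hα k]
    field_simp
    ring
  have hfac_nonneg : ∀ k : ℕ, 1 ≤ k → 0 ≤ 1 - α k := by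
    intro k hk
    rw [hfac k hk]
    apply div_nonneg _ (hden k).le
    have : (1:ℝ) ≤ k := by exact_mod_cast hk
    linarith
  have hPnonneg : ∀ n, 0 ≤ P n := by
    intro n
    apply Finset.prod_nonneg
    intro k hk
    exact hfac_nonneg k (le_trans (le_trans hj (Nat.le_succ j)) (Finset.mem_Icc.1 hk).1)
  have hPj : P j = 1 := by
    simp [hPdef, Finset.Icc_eq_empty_of_lt (Nat.lt_succ_self j)]
  have hPsucc : ∀ n, j ≤ n → P (n+1) = P n * (1 - α (n+1)) := by
    intro n hn
    rw [hPdef]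
    exact Finset.prod_Icc_succ_top (by omega) _
  set u : ℕ → ℝ := fun n => ((n:ℝ) + H) / H * P n with hudef
  have hustep : ∀ n, j ≤ n → u n - u (n+1) = P n := by
    intro n hn
    have h1 : 1 ≤ n + 1 := by omega
    rw [hudef]
    simp only
    rw [hPsucc n hn, hfac (n+1) h1]
    push_cast
    have hd : H + ((n:ℝ)+1) ≠ 0 := by have := hden (n+1); push_cast at this; linarith
    field_simp
    ring
  -- partial sums
  set f : ℕ → ℝ := fun t => if j ≤ t then αj j t else 0 with hfdef
  have hpartial : ∀ n, j ≤ n → ∑ t ∈ Finset.range n, f t = α j * (u j - u n) := by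
    intro n hn
    induction n, hn using Nat.le_induction with
    | base =>
      simp only [hfdef, sub_self, mul_zero]
      refine Finset.sum_eq_zero fun t ht => ?_
      have ht' := Finset.mem_range.1 ht
      exact if_neg (by omega)
    | succ n hn ih =>
      rw [Finset.sum_range_succ, ih, hfdef]
      simp only [hn, if_pos]
      rw [hαj j n]
      have hPn : ∏ k ∈ Finset.Icc (j + 1) n, (1 - α k) = P n := rfl
      rw [hPn, ← hustep n hn]
      ring
  -- bound on P
  have hPbound : ∀ n, j ≤ n → P n ≤ ((j:ℝ) * (j+1)) / ((n:ℝ) * (n+1)) := by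
    intro n hn
    induction n, hn using Nat.le_induction with
    | base =>
      rw [hPj, div_self]
      have : (1:ℝ) ≤ j := by exact_mod_cast hj
      positivity
    | succ n hn ih =>
      have hn1 : (1:ℝ) ≤ n := by exact_mod_cast le_trans hj hn
      rw [hPsucc n hn, hfac (n+1) (by omega)]
      push_cast
      have hb : ((n:ℝ)+1-1) / (H + (n+1)) ≤ (n:ℝ) / ((n:ℝ)+2) := by
        rw [show ((n:ℝ)+1-1) = (n:ℝ) by ring]
        apply div_le_div_of_nonneg_left (by linarith) (by linarith) (by linarith)
      have hbn : (0:ℝ) ≤ (n:ℝ) / ((n:ℝ)+2) := by positivity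
      calc P n * (((n:ℝ)+1-1) / (H + (n+1)))
          ≤ ((j:ℝ) * (j+1)) / ((n:ℝ) * (n+1)) * ((n:ℝ) / ((n:ℝ)+2)) := by
            apply mul_le_mul ih hb (by
              rw [show ((n:ℝ)+1-1) = (n:ℝ) by ring]
              positivity) (by positivity)
        _ = ((j:ℝ) * (j+1)) / (((n:ℝ)+1) * ((n:ℝ)+1+1)) := by
            field_simp
            ring
  -- u tends to 0
  have hunonneg : ∀ n, 0 ≤ u n := by
    intro n
    apply mul_nonneg _ (hPnonneg n)
    positivity
  have hubound : ∀ n, j ≤ n → u n ≤ (1+H) * ((j:ℝ)*(j+1)) / H / ((n:ℝ)+1) := by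
    intro n hn
    have hn1 : (1:ℝ) ≤ n := by exact_mod_cast le_trans hj hn
    have h1 : u n ≤ ((n:ℝ) + H) / H * (((j:ℝ) * (j+1)) / ((n:ℝ) * (n+1))) := by
      apply mul_le_mul_of_nonneg_left (hPbound n hn) (by positivity)
    refine h1.trans ?_
    rw [div_mul_div_comm, div_div, div_le_div_iff₀ (by positivity) (by positivity)]
    have key : ((n:ℝ) + H) ≤ (1+H) * n := by nlinarith
    nlinarith [mul_le_mul_of_nonneg_right key
      (by positivity : (0:ℝ) ≤ (j:ℝ)*((j:ℝ)+1)*(H*((n:ℝ)+1)))]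
  have hutend : Filter.Tendsto u Filter.atTop (nhds 0) := by
    have hlim : Filter.Tendsto (fun n : ℕ => (1+H) * ((j:ℝ)*(j+1)) / H / ((n:ℝ)+1))
        Filter.atTop (nhds 0) := by
      have := tendsto_one_div_add_atTop_nhds_zero_nat.const_mul ((1+H) * ((j:ℝ)*(j+1)) / H)
      simpa [div_eq_mul_inv, mul_comm] using this
    refine tendsto_of_tendsto_of_tendsto_of_le_of_le' tendsto_const_nhds hlim ?_ ?_
    · exact Filter.Eventually.of_forall hunonneg
    · filter_upwards [Filter.eventually_ge_atTop j] with n hn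
      exact hubound n hn
  have hfnonneg : ∀ t, 0 ≤ f t := by
    intro t
    simp only [hfdef]
    split
    · rw [hαj]
      exact mul_nonneg (by rw [hα]; positivity) (hPnonneg t)
    · exact le_refl 0
  rw [hasSum_iff_tendsto_nat_of_nonneg hfnonneg]
  have hval : α j * u j = 1 + 1/H := by
    rw [hudef]
    simp only
    rw [hPj, hα j]
    have := hden j
    field_simp
    ring
  have : Filter.Tendsto (fun n => α j * (u j - u n)) Filter.atTop (nhds (1 + 1/H)) := by
    have h : Filter.Tendsto (fun n => α j * (u j - u n)) Filter.atTop
        (nhds (α j * (u j - 0))) :=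
      (Filter.Tendsto.sub (tendsto_const_nhds (x := u j)) hutend).const_mul (α j)
    rw [sub_zero, hval] at h
    exact h
  refine this.congr' ?_
  filter_upwards [Filter.eventually_ge_atTop j] with n hn
  exact (hpartial n hn).symm
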